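/- The map ψ(x,y) = ((αx+y)⁻¹(βx+y)y⁻¹, (αx+y)⁻¹(βx+y)x⁻¹) on pairs of symmetric positive definite matrices is an involution: ψ(ψ(x,y)) = (x,y). -/

import Mathlib

/-- The map `ψ(x,y) = ((αx+y)⁻¹(βx+y)y⁻¹, (αx+y)⁻¹(βx+y)x⁻¹)` on pairs of
matrices. -/
noncomputable def psiMap {r : ℕ} (α β : ℝ)
    (p : Matrix (Fin r) (Fin r) ℝ × Matrix (Fin r) (Fin r) ℝ) :
    Matrix (Fin r) (Fin r) ℝ × Matrix (Fin r) (Fin r) ℝ :=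
  ((α • p.1 + p.2)⁻¹ * (β • p.1 + p.2) * p.2⁻¹,
   (α • p.1 + p.2)⁻¹ * (β • p.1 + p.2) * p.1⁻¹)

lemma posDef_smul_aux {r : ℕ} (c : ℝ) (hc : 0 < c) {x : Matrix (Fin r) (Fin r) ℝ}
    (hx : x.PosDef) : (c • x).PosDef := by
  refine ⟨?_, fun v hv => ?_⟩
  · unfold Matrix.IsHermitian
    rw [Matrix.conjTranspose_smul, hx.1]; simp
  · exact (hx.smul hc).2 hv

lemma posSemidef_smul_aux {r : ℕ} (c : ℝ) (hc : 0 ≤ c) {x : Matrix (Fin r) (Fin r) ℝ}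
    (hx : x.PosDef) : (c • x).PosSemidef := by
  refine ⟨?_, fun v => ?_⟩
  · unfold Matrix.IsHermitian
    rw [Matrix.conjTranspose_smul, hx.1]; simp
  · exact (hx.posSemidef.smul hc).2 v

/-- `ψ` is an involution on pairs of symmetric positive definite matrices. -/
theorem psiMap_involution {r : ℕ} (α β : ℝ) (hα : 0 < α) (hβ : 0 ≤ β)
    (x y : Matrix (Fin r) (Fin r) ℝ) (hx : x.PosDef) (hy : y.PosDef) :
    psiMap α β (psiMap α β (x, y)) = (x, y) := by
  set A : Matrix (Fin r) (Fin r) ℝ := α • x + y with hA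
  set B : Matrix (Fin r) (Fin r) ℝ := β • x + y with hB
  have hApd : A.PosDef := (posDef_smul_aux α hα hx).add hy
  have hBpd : B.PosDef := Matrix.PosDef.posSemidef_add (posSemidef_smul_aux β hβ hx) hy
  suffices h : ((α • (A⁻¹ * B * y⁻¹) + A⁻¹ * B * x⁻¹)⁻¹ *
      (β • (A⁻¹ * B * y⁻¹) + A⁻¹ * B * x⁻¹) * (A⁻¹ * B * x⁻¹)⁻¹ = x) ∧
      ((α • (A⁻¹ * B * y⁻¹) + A⁻¹ * B * x⁻¹)⁻¹ *
      (β • (A⁻¹ * B * y⁻¹) + A⁻¹ * B * x⁻¹) * (A⁻¹ * B * y⁻¹)⁻¹ = y) by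
    rw [Prod.ext_iff]
    exact ⟨h.1, h.2⟩
  clear_value A B
  have hxd : IsUnit x.det := hx.det_pos.ne'.isUnit
  have hyd : IsUnit y.det := hy.det_pos.ne'.isUnit
  have hAd : IsUnit A.det := hApd.det_pos.ne'.isUnit
  have hBd : IsUnit B.det := hBpd.det_pos.ne'.isUnit
  -- cancellation helpers
  have xc : ∀ M : Matrix (Fin r) (Fin r) ℝ, x * (x⁻¹ * M) = M :=
    fun M => Matrix.mul_nonsing_inv_cancel_left _ _ hxd
  have xc' : ∀ M : Matrix (Fin r) (Fin r) ℝ, x⁻¹ * (x * M) = M :=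
    fun M => Matrix.nonsing_inv_mul_cancel_left _ _ hxd
  have yc : ∀ M : Matrix (Fin r) (Fin r) ℝ, y * (y⁻¹ * M) = M :=
    fun M => Matrix.mul_nonsing_inv_cancel_left _ _ hyd
  have yc' : ∀ M : Matrix (Fin r) (Fin r) ℝ, y⁻¹ * (y * M) = M :=
    fun M => Matrix.nonsing_inv_mul_cancel_left _ _ hyd
  have Ac : ∀ M : Matrix (Fin r) (Fin r) ℝ, A * (A⁻¹ * M) = M :=
    fun M => Matrix.mul_nonsing_inv_cancel_left _ _ hAd
  have Ac' : ∀ M : Matrix (Fin r) (Fin r) ℝ, A⁻¹ * (A * M) = M :=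
    fun M => Matrix.nonsing_inv_mul_cancel_left _ _ hAd
  have Bc : ∀ M : Matrix (Fin r) (Fin r) ℝ, B * (B⁻¹ * M) = M :=
    fun M => Matrix.mul_nonsing_inv_cancel_left _ _ hBd
  have Bc' : ∀ M : Matrix (Fin r) (Fin r) ℝ, B⁻¹ * (B * M) = M :=
    fun M => Matrix.nonsing_inv_mul_cancel_left _ _ hBd
  have hxx : x * x⁻¹ = 1 := Matrix.mul_nonsing_inv _ hxd
  have hxx' : x⁻¹ * x = 1 := Matrix.nonsing_inv_mul _ hxd
  have hyy : y * y⁻¹ = 1 := Matrix.mul_nonsing_inv _ hyd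
  have hyy' : y⁻¹ * y = 1 := Matrix.nonsing_inv_mul _ hyd
  have hAA : A * A⁻¹ = 1 := Matrix.mul_nonsing_inv _ hAd
  have hBB : B * B⁻¹ = 1 := Matrix.mul_nonsing_inv _ hBd
  -- commutation identities
  have hABy : A * (y⁻¹ * B) = B * (y⁻¹ * A) := by
    rw [hA, hB]
    simp only [add_mul, mul_add, Matrix.smul_mul, Matrix.mul_smul, hyy', yc', yc,
      Matrix.mul_one, Matrix.one_mul, smul_add, smul_smul]
    rw [mul_comm α β]
    abel
  have hABx : A * (x⁻¹ * B) = B * (x⁻¹ * A) := by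
    rw [hA, hB]
    simp only [add_mul, mul_add, Matrix.smul_mul, Matrix.mul_smul, hxx', xc', xc,
      Matrix.mul_one, Matrix.one_mul, smul_add, smul_smul]
    rw [mul_comm α β]
    abel
  have h1 : ∀ M : Matrix (Fin r) (Fin r) ℝ,
      A⁻¹ * (B * (y⁻¹ * M)) = y⁻¹ * (B * (A⁻¹ * M)) := by
    intro M
    have e : A⁻¹ * (B * (y⁻¹ * A)) = y⁻¹ * B := by
      rw [← hABy, Ac']
    calc A⁻¹ * (B * (y⁻¹ * M)) = A⁻¹ * (B * (y⁻¹ * (A * (A⁻¹ * M)))) := by rw [Ac]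
      _ = (A⁻¹ * (B * (y⁻¹ * A))) * (A⁻¹ * M) := by
          simp only [Matrix.mul_assoc]
      _ = y⁻¹ * (B * (A⁻¹ * M)) := by rw [e, Matrix.mul_assoc]
  have h2 : ∀ M : Matrix (Fin r) (Fin r) ℝ,
      A⁻¹ * (x * (B⁻¹ * M)) = B⁻¹ * (x * (A⁻¹ * M)) := by
    intro M
    have e : B * (x⁻¹ * A) * (A⁻¹ * (x * B⁻¹)) = 1 := by
      simp only [Matrix.mul_assoc, Ac, xc', hBB]
    have e2 : A⁻¹ * (x * B⁻¹) = (B * (x⁻¹ * A))⁻¹ :=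
      (Matrix.inv_eq_right_inv e).symm
    have e' : A * (x⁻¹ * B) * (B⁻¹ * (x * A⁻¹)) = 1 := by
      simp only [Matrix.mul_assoc, Bc, xc', hAA]
    have e2' : B⁻¹ * (x * A⁻¹) = (A * (x⁻¹ * B))⁻¹ :=
      (Matrix.inv_eq_right_inv e').symm
    have key : A⁻¹ * (x * B⁻¹) = B⁻¹ * (x * A⁻¹) := by
      rw [e2, e2', hABx]
    calc A⁻¹ * (x * (B⁻¹ * M)) = (A⁻¹ * (x * B⁻¹)) * M := by simp only [Matrix.mul_assoc]
      _ = (B⁻¹ * (x * A⁻¹)) * M := by rw [key]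
      _ = B⁻¹ * (x * (A⁻¹ * M)) := by simp only [Matrix.mul_assoc]
  have h1x : ∀ M : Matrix (Fin r) (Fin r) ℝ,
      A⁻¹ * (B * (x⁻¹ * M)) = x⁻¹ * (B * (A⁻¹ * M)) := by
    intro M
    have e : A⁻¹ * (B * (x⁻¹ * A)) = x⁻¹ * B := by
      rw [← hABx, Ac']
    calc A⁻¹ * (B * (x⁻¹ * M)) = A⁻¹ * (B * (x⁻¹ * (A * (A⁻¹ * M)))) := by rw [Ac]
      _ = (A⁻¹ * (B * (x⁻¹ * A))) * (A⁻¹ * M) := by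
          simp only [Matrix.mul_assoc]
      _ = x⁻¹ * (B * (A⁻¹ * M)) := by rw [e, Matrix.mul_assoc]
  have hAA' : A⁻¹ * A = 1 := Matrix.nonsing_inv_mul _ hAd
  have hBB' : B⁻¹ * B = 1 := Matrix.nonsing_inv_mul _ hBd
  -- components of ψ(x,y)
  have step1 : α • (A⁻¹ * B * y⁻¹) + A⁻¹ * B * x⁻¹ = A⁻¹ * B * (x⁻¹ * A * y⁻¹) := by
    have e : x⁻¹ * A * y⁻¹ = α • y⁻¹ + x⁻¹ := by
      rw [hA]
      simp only [mul_add, add_mul, Matrix.mul_smul, Matrix.smul_mul, Matrix.mul_assoc, hyy',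
        hyy, Matrix.mul_one, hxx']
      simp [xc', hyy]
    rw [e, mul_add, Matrix.mul_smul]
  have step2 : β • (A⁻¹ * B * y⁻¹) + A⁻¹ * B * x⁻¹ = A⁻¹ * B * (x⁻¹ * B * y⁻¹) := by
    have e : x⁻¹ * B * y⁻¹ = β • y⁻¹ + x⁻¹ := by
      rw [hB]
      simp only [mul_add, add_mul, Matrix.mul_smul, Matrix.smul_mul, Matrix.mul_assoc, hyy',
        hyy, Matrix.mul_one, hxx']
      simp [xc', hyy]
    rw [e, mul_add, Matrix.mul_smul]
  have hu : (A⁻¹ * B * y⁻¹)⁻¹ = y * (B⁻¹ * A) := by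
    simp only [Matrix.mul_inv_rev, Matrix.nonsing_inv_nonsing_inv _ hyd,
      Matrix.nonsing_inv_nonsing_inv _ hAd, Matrix.mul_assoc]
  have hv : (A⁻¹ * B * x⁻¹)⁻¹ = x * (B⁻¹ * A) := by
    simp only [Matrix.mul_inv_rev, Matrix.nonsing_inv_nonsing_inv _ hxd,
      Matrix.nonsing_inv_nonsing_inv _ hAd, Matrix.mul_assoc]
  have hinv1 : (A⁻¹ * B * (x⁻¹ * A * y⁻¹))⁻¹ = y * (A⁻¹ * (x * (B⁻¹ * A))) := by
    simp only [Matrix.mul_inv_rev, Matrix.nonsing_inv_nonsing_inv _ hyd,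
      Matrix.nonsing_inv_nonsing_inv _ hAd, Matrix.nonsing_inv_nonsing_inv _ hxd,
      Matrix.mul_assoc]
  constructor
  · rw [step1, step2, hv, hinv1]
    simp only [Matrix.mul_assoc, h1, h2, h1x, xc, xc', yc, yc', Ac, Ac', Bc, Bc',
      hxx, hxx', hyy, hyy', hAA, hAA', hBB, hBB', Matrix.mul_one, Matrix.one_mul]
  · show (α • (A⁻¹ * B * y⁻¹) + A⁻¹ * B * x⁻¹)⁻¹ *
      (β • (A⁻¹ * B * y⁻¹) + A⁻¹ * B * x⁻¹) * (A⁻¹ * B * y⁻¹)⁻¹ = y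
    rw [step1, step2, hu, hinv1]
    simp only [Matrix.mul_assoc, h1, h2, h1x, xc, xc', yc, yc', Ac, Ac', Bc, Bc',
      hxx, hxx', hyy, hyy', hAA, hAA', hBB, hBB', Matrix.mul_one, Matrix.one_mul]
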